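/- (Exponential iterate bound) In the rescaledexp algorithm with k = √2, the iterates satisfy ‖w_{t+1}‖ ≤ exp(√(T/2)) − 1 for all t < T within an epoch of length at most T, because η_t‖g_{1:t}‖ ≤ √(p‖g_{1:t}‖)/2 ≤ √(p·L·t)/2 ≤ √(t/2) whenever p ≤ 2/L and ‖g_s‖ ≤ L for s ≤ t. -/

import Mathlib

open Finset

/-- Exponential iterate bound for rescaledexp with k = √2. -/
theorem stmt16 (d T : ℕ) (g : ℕ → EuclideanSpace ℝ (Fin d)) (p L : ℝ)
    (hL : 0 < L) (hp : 0 < p) (hpL : p ≤ 2 / L)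
    (M η : ℕ → ℝ) (hM0 : M 0 = 0)
    (hM : ∀ s, 1 ≤ s → M s = max (M (s - 1))
      (‖∑ r ∈ Icc 1 s, g r‖ / p - ∑ r ∈ Icc 1 s, ‖g r‖ ^ 2))
    (hη : ∀ s, η s = 1 / (2 * Real.sqrt (M s + ∑ r ∈ Icc 1 s, ‖g r‖ ^ 2)))
    (w : ℕ → EuclideanSpace ℝ (Fin d))
    (hw : ∀ s, w (s + 1) =
      (-(Real.exp (η s * ‖∑ r ∈ Icc 1 s, g r‖) - 1) / ‖∑ r ∈ Icc 1 s, g r‖) •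
        ∑ r ∈ Icc 1 s, g r)
    (t : ℕ) (ht : t < T)
    (hg : ∀ s, 1 ≤ s → s ≤ t → ‖g s‖ ≤ L) :
    ‖w (t + 1)‖ ≤ Real.exp (Real.sqrt (T / 2 : ℝ)) - 1 := by
  have hexpT : (1:ℝ) ≤ Real.exp (Real.sqrt (T / 2 : ℝ)) :=
    Real.one_le_exp (Real.sqrt_nonneg _)
  set G := ∑ r ∈ Icc 1 t, g r with hGdef
  set S := ∑ r ∈ Icc 1 t, ‖g r‖ ^ 2 with hSdef
  rw [hw t]
  by_cases h0 : G = 0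
  · rw [← hGdef, h0]
    simp
    positivity
  · have hGpos : 0 < ‖G‖ := norm_pos_iff.mpr h0
    have hSnn : 0 ≤ S := sum_nonneg fun _ _ => sq_nonneg _
    have ht1 : 1 ≤ t := by
      by_contra h
      push_neg at h
      interval_cases t
      simp [hGdef] at h0
    have hMt : ‖G‖ / p - S ≤ M t := by
      rw [hM t ht1]
      exact le_max_right _ _
    have hA : ‖G‖ / p ≤ M t + S := by linarith
    have hApos : 0 < M t + S := lt_of_lt_of_le (div_pos hGpos hp) hA
    have hηnn : 0 ≤ η t := by
      rw [hη t, ← hSdef]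
      positivity
    have hxnn : 0 ≤ η t * ‖G‖ := mul_nonneg hηnn hGpos.le
    have hexp1 : 1 ≤ Real.exp (η t * ‖G‖) := Real.one_le_exp hxnn
    rw [← hGdef, norm_smul, Real.norm_eq_abs, abs_div, abs_neg,
      abs_of_nonneg (by linarith), abs_norm, div_mul_cancel₀ _ (ne_of_gt hGpos)]
    -- bound ‖G‖ ≤ L * t
    have hGL : ‖G‖ ≤ L * t := by
      calc ‖G‖ ≤ ∑ r ∈ Icc 1 t, ‖g r‖ := norm_sum_le _ _
        _ ≤ ∑ r ∈ Icc 1 t, L := Finset.sum_le_sum fun r hr => by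
            rw [mem_Icc] at hr; exact hg r hr.1 hr.2
        _ = L * t := by rw [Finset.sum_const, Nat.card_Icc]; push_cast; ring
    have hpG : p * ‖G‖ ≤ 2 * t := by
      have h1 : p * ‖G‖ ≤ p * (L * t) :=
        mul_le_mul_of_nonneg_left hGL hp.le
      have h2 : p * (L * t) ≤ (2 / L) * (L * t) := by
        apply mul_le_mul_of_nonneg_right hpL
        positivity
      have h3 : (2 / L) * (L * t) = 2 * t := by field_simp
      linarith
    have hx : η t * ‖G‖ ≤ Real.sqrt (T / 2 : ℝ) := by
      have hsq : (η t * ‖G‖) ^ 2 ≤ (T / 2 : ℝ) := by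
        have hηsq : (η t) ^ 2 = 1 / (4 * (M t + S)) := by
          rw [hη t, ← hSdef]
          rw [div_pow, mul_pow, Real.sq_sqrt hApos.le]
          norm_num
        have he : (η t * ‖G‖) ^ 2 = ‖G‖ ^ 2 / (4 * (M t + S)) := by
          rw [mul_pow, hηsq]; ring
        rw [he]
        have htT : (t : ℝ) ≤ (T : ℝ) - 1 := by
          have : (t : ℝ) + 1 ≤ T := by exact_mod_cast ht
          linarith
        rw [div_le_iff₀ (by positivity)]
        have hkey : ‖G‖ ^ 2 * 2 ≤ t * (4 * (M t + S)) := by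
          have hGp : ‖G‖ ≤ (M t + S) * p := (div_le_iff₀ hp).mp hA
          nlinarith [mul_le_mul_of_nonneg_right hGp hGpos.le,
            mul_le_mul_of_nonneg_left hpG hApos.le]
        nlinarith [hkey]
      calc η t * ‖G‖ = Real.sqrt ((η t * ‖G‖) ^ 2) := (Real.sqrt_sq hxnn).symm
        _ ≤ Real.sqrt (T / 2 : ℝ) := Real.sqrt_le_sqrt hsq
    linarith [Real.exp_le_exp.mpr hx]
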